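/- arXiv:1310.1063 — 4 statements merged into one kernel-verified Lean document; each statement's English description precedes it below -/
import Mathlib

section
/- Let d, n ≥ 1 and let Ĵ be the (2d+n)×(2d+n) block matrix [[J, 0],[0, 0]], where J is the 2d×2d block matrix [[0, −I],[I, 0]] with d×d identity blocks I. An invertible real (2d+n)×(2d+n) matrix B satisfies B Ĵ Bᵀ = Ĵ if and only if B has block form [[A, a],[0, b]], where A is a 2d×2d matrix with Aᵀ J A = J (i.e. A is symplectic), a is an arbitrary 2d×n real matrix, and b is an invertible n×n real matrix. -/
open Matrix

lemma aux_symp {m : Type*} [Fintype m] [DecidableEq m]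
    (J A : Matrix m m ℝ) (hJ2 : J * J = -1) (h : A * J * Aᵀ = J) :
    Aᵀ * J * A = J := by
  have h1 : A * (J * Aᵀ * -J) = 1 := by
    have : A * (J * Aᵀ * -J) = (A * J * Aᵀ) * -J := by noncomm_ring
    rw [this, h, mul_neg, hJ2, neg_neg]
  have h2 : (J * Aᵀ * -J) * A = 1 := mul_eq_one_comm.mp h1
  have h3 : -J * (J * Aᵀ * -J * A) = -J * 1 := by rw [h2]
  have h4 : -J * (J * Aᵀ * -J * A) = -(Aᵀ * J * A) := by
    have e : -J * (J * Aᵀ * -J * A) = -(J * J) * (Aᵀ * -J * A) := by noncomm_ring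
    rw [e, hJ2]; noncomm_ring
  have : -(Aᵀ * J * A) = -J := by rw [← h4, h3, mul_one]
  exact neg_injective this

/-- An invertible real `(2d+n)×(2d+n)` matrix `B` satisfies `B Ĵ Bᵀ = Ĵ`
iff it has block form `[[A, a],[0, b]]` with `A` symplectic and `b` invertible. -/
theorem stmt_0 (d n : ℕ) (hd : 1 ≤ d) (hn : 1 ≤ n)
    (J : Matrix (Fin d ⊕ Fin d) (Fin d ⊕ Fin d) ℝ)
    (hJ : J = Matrix.fromBlocks 0 (-1) 1 0)
    (Jhat : Matrix ((Fin d ⊕ Fin d) ⊕ Fin n) ((Fin d ⊕ Fin d) ⊕ Fin n) ℝ)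
    (hJhat : Jhat = Matrix.fromBlocks J 0 0 0)
    (B : Matrix ((Fin d ⊕ Fin d) ⊕ Fin n) ((Fin d ⊕ Fin d) ⊕ Fin n) ℝ)
    (hB : IsUnit B) :
    B * Jhat * Bᵀ = Jhat ↔
      ∃ (A : Matrix (Fin d ⊕ Fin d) (Fin d ⊕ Fin d) ℝ)
        (a : Matrix (Fin d ⊕ Fin d) (Fin n) ℝ)
        (b : Matrix (Fin n) (Fin n) ℝ),
        Aᵀ * J * A = J ∧ IsUnit b ∧ B = Matrix.fromBlocks A a 0 b := by
  have hJ2 : J * J = -1 := by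
    subst hJ
    simp [Matrix.fromBlocks_multiply, Matrix.fromBlocks_neg,
      ← Matrix.fromBlocks_one]
  have hJmul : J * -J = 1 := by rw [mul_neg, hJ2, neg_neg]
  have hJunit : IsUnit J := ⟨⟨J, -J, hJmul, mul_eq_one_comm.mp hJmul⟩, rfl⟩
  constructor
  · intro hEq
    set A := B.toBlocks₁₁ with hA
    set a := B.toBlocks₁₂ with ha
    set c := B.toBlocks₂₁ with hc
    set b := B.toBlocks₂₂ with hb
    have hBblocks : B = Matrix.fromBlocks A a c b := (Matrix.fromBlocks_toBlocks B).symm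
    rw [hBblocks, hJhat, Matrix.fromBlocks_transpose, Matrix.fromBlocks_multiply,
      Matrix.fromBlocks_multiply] at hEq
    simp only [Matrix.mul_zero, Matrix.zero_mul, add_zero, zero_add, mul_zero,
      zero_mul] at hEq
    rw [Matrix.fromBlocks_inj] at hEq
    obtain ⟨h11, -, h21, -⟩ := hEq
    -- h11 : A * J * Aᵀ = J, h21 : c * J * Aᵀ = 0
    have hAunit : IsUnit A := by
      rw [Matrix.isUnit_iff_isUnit_det]
      have hdet := congrArg Matrix.det h11
      simp only [Matrix.det_mul, Matrix.det_transpose] at hdet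
      have hJdet : IsUnit J.det := (Matrix.isUnit_iff_isUnit_det J).mp hJunit
      rcases hJdet.ne_zero with hne
      rw [isUnit_iff_ne_zero]
      intro h0
      rw [h0] at hdet
      simp at hdet
      exact hne hdet.symm
    have hAsymp : Aᵀ * J * A = J := aux_symp J A hJ2 h11
    have hATunit : IsUnit Aᵀ := by
      rw [Matrix.isUnit_iff_isUnit_det, Matrix.det_transpose]
      exact (Matrix.isUnit_iff_isUnit_det A).mp hAunit
    have hc0 : c = 0 := by
      have hM : IsUnit (J * Aᵀ).det := by
        rw [Matrix.det_mul]
        exact ((Matrix.isUnit_iff_isUnit_det J).mp hJunit).mul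
          ((Matrix.isUnit_iff_isUnit_det _).mp hATunit)
      have hinv : (J * Aᵀ) * (J * Aᵀ)⁻¹ = 1 := Matrix.mul_nonsing_inv _ hM
      calc c = c * ((J * Aᵀ) * (J * Aᵀ)⁻¹) := by rw [hinv, Matrix.mul_one]
        _ = (c * J * Aᵀ) * (J * Aᵀ)⁻¹ := by
            rw [← Matrix.mul_assoc, ← Matrix.mul_assoc]
        _ = 0 := by rw [h21, Matrix.zero_mul]
    rw [hc0] at hBblocks
    have hbunit : IsUnit b := by
      rw [Matrix.isUnit_iff_isUnit_det]
      have hBdet : IsUnit B.det := (Matrix.isUnit_iff_isUnit_det B).mp hB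
      rw [hBblocks, Matrix.det_fromBlocks_zero₂₁] at hBdet
      exact isUnit_of_mul_isUnit_right hBdet
    exact ⟨A, a, b, hAsymp, hbunit, hBblocks⟩
  · rintro ⟨A, a, b, hAsymp, hbunit, rfl⟩
    have h11 : A * J * Aᵀ = J := by
      have := aux_symp J Aᵀ hJ2 (by rwa [Matrix.transpose_transpose])
      rwa [Matrix.transpose_transpose] at this
    rw [hJhat, Matrix.fromBlocks_transpose, Matrix.fromBlocks_multiply,
      Matrix.fromBlocks_multiply]
    simp [h11]
end

section
/- Let ℓ : ℝ → ℝ be a C¹ function with ℓ(r) = 1 for |r| ≤ 1/4, let α ∈ ℝ and 1 ≤ i ≤ d, and let K_i(x, y, z) = α ℓ(ρ) ρ_i on ℝ^{2d+n}, where ρ = ½‖(x,y,z)‖₂² and ρ_i = ½(x_i² + y_i²). Fix an initial point p = (x, y, z) with ρ(p) ≤ 1/4. Then the curve γ(t) defined by (x_i(t), y_i(t)) = R_{tα}(x_i, y_i) (rotation of the pair (x_i, y_i) by angle tα) and all other coordinates kept equal to those of p, is a solution of γ′ = X_{K_i}(γ) with γ(0) = p, defined for all t ∈ ℝ; in particular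 ρ(γ(t)) = ρ(p) ≤ 1/4 for all t. -/
/-- Projection to the `j`-th `x` coordinate. -/
noncomputable def PX (d n : ℕ) (j : Fin d) :
    ((Fin d → ℝ) × (Fin d → ℝ) × (Fin n → ℝ)) →L[ℝ] ℝ :=
  (ContinuousLinearMap.proj j).comp
    (ContinuousLinearMap.fst ℝ (Fin d → ℝ) ((Fin d → ℝ) × (Fin n → ℝ)))

/-- Projection to the `j`-th `y` coordinate. -/
noncomputable def PY (d n : ℕ) (j : Fin d) :
    ((Fin d → ℝ) × (Fin d → ℝ) × (Fin n → ℝ)) →L[ℝ] ℝ :=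
  (ContinuousLinearMap.proj j).comp
    ((ContinuousLinearMap.fst ℝ (Fin d → ℝ) (Fin n → ℝ)).comp
      (ContinuousLinearMap.snd ℝ (Fin d → ℝ) ((Fin d → ℝ) × (Fin n → ℝ))))

@[simp] lemma PX_apply {d n : ℕ} (j : Fin d)
    (v : (Fin d → ℝ) × (Fin d → ℝ) × (Fin n → ℝ)) : PX d n j v = v.1 j := rfl

@[simp] lemma PY_apply {d n : ℕ} (j : Fin d)
    (v : (Fin d → ℝ) × (Fin d → ℝ) × (Fin n → ℝ)) : PY d n j v = v.2.1 j := rfl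

lemma ell_deriv_zero {ℓ : ℝ → ℝ} (hℓ : ContDiff ℝ 1 ℓ)
    (hℓ1 : ∀ r : ℝ, |r| ≤ 1 / 4 → ℓ r = 1) {r : ℝ} (hr : |r| ≤ 1 / 4) :
    deriv ℓ r = 0 := by
  have hmem : r ∈ Set.Icc (-(1/4) : ℝ) (1/4) := by
    rcases abs_le.1 hr with ⟨h1, h2⟩; exact ⟨by linarith, h2⟩
  have hu : UniqueDiffWithinAt ℝ (Set.Icc (-(1/4) : ℝ) (1/4)) r :=
    (uniqueDiffOn_Icc (by norm_num)) r hmem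
  have h1 : HasDerivWithinAt ℓ (deriv ℓ r) (Set.Icc (-(1/4):ℝ) (1/4)) r :=
    ((hℓ.differentiable one_ne_zero r).hasDerivAt).hasDerivWithinAt
  have h2 : HasDerivWithinAt ℓ 0 (Set.Icc (-(1/4):ℝ) (1/4)) r := by
    refine (hasDerivWithinAt_const r _ (1:ℝ)).congr (fun x hx => ?_) (hℓ1 r hr)
    exact hℓ1 x (abs_le.2 ⟨by linarith [hx.1], hx.2⟩)
  rw [← h1.derivWithin hu, h2.derivWithin hu]
/-- `ρ(x,y,z) = ½‖(x,y,z)‖₂²` on `ℝ^{2d+n} = ℝ^d × ℝ^d × ℝ^n`. -/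
noncomputable def rho {d n : ℕ} (p : (Fin d → ℝ) × (Fin d → ℝ) × (Fin n → ℝ)) : ℝ :=
  (1 / 2) * (∑ j, p.1 j ^ 2 + ∑ j, p.2.1 j ^ 2 + ∑ k, p.2.2 k ^ 2)

/-- `ρ_i(x,y,z) = ½(x_i² + y_i²)`. -/
noncomputable def rhoI {d n : ℕ} (i : Fin d)
    (p : (Fin d → ℝ) × (Fin d → ℝ) × (Fin n → ℝ)) : ℝ :=
  (1 / 2) * (p.1 i ^ 2 + p.2.1 i ^ 2)

/-- The Hamiltonian vector field `X_K = Ĵ ∇K`, i.e. `ẋ = -∇_y K`, `ẏ = ∇_x K`, `ż = 0`. -/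
noncomputable def hamVF {d n : ℕ}
    (K : (Fin d → ℝ) × (Fin d → ℝ) × (Fin n → ℝ) → ℝ)
    (p : (Fin d → ℝ) × (Fin d → ℝ) × (Fin n → ℝ)) :
    (Fin d → ℝ) × (Fin d → ℝ) × (Fin n → ℝ) :=
  (fun j => -(fderiv ℝ K p (0, Pi.single j 1, 0)),
   fun j => fderiv ℝ K p (Pi.single j 1, 0, 0),
   0)

lemma hasFDerivAt_K {d n : ℕ} {ℓ : ℝ → ℝ} (hℓ : ContDiff ℝ 1 ℓ)
    (hℓ1 : ∀ r : ℝ, |r| ≤ 1 / 4 → ℓ r = 1) (α : ℝ) (i : Fin d)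
    {q : (Fin d → ℝ) × (Fin d → ℝ) × (Fin n → ℝ)} (hq : |rho q| ≤ 1/4) :
    HasFDerivAt (fun p => α * ℓ (rho p) * rhoI i p)
      (α • (q.1 i • PX d n i + q.2.1 i • PY d n i)) q := by
  have hrho : DifferentiableAt ℝ (rho (d:=d) (n:=n)) q := by
    unfold rho; fun_prop
  have h1 : HasFDerivAt (fun p => ℓ (rho p)) ((deriv ℓ (rho q)) • fderiv ℝ rho q) q :=
    HasDerivAt.comp_hasFDerivAt q ((hℓ.differentiable one_ne_zero _).hasDerivAt) hrho.hasFDerivAt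
  rw [ell_deriv_zero hℓ hℓ1 hq, zero_smul] at h1
  have h2 : HasFDerivAt (fun p => α * ℓ (rho p))
      (0 : ((Fin d → ℝ) × (Fin d → ℝ) × (Fin n → ℝ)) →L[ℝ] ℝ) q := by
    simpa using h1.const_mul α
  have h3 : HasFDerivAt (rhoI (d:=d) (n:=n) i) (q.1 i • PX d n i + q.2.1 i • PY d n i) q := by
    have hx := ((PX d n i).hasFDerivAt (x := q)).mul ((PX d n i).hasFDerivAt (x := q))
    have hy := ((PY d n i).hasFDerivAt (x := q)).mul ((PY d n i).hasFDerivAt (x := q))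
    have h := (hx.add hy).const_mul (1/2 : ℝ)
    convert h using 1 <;> try rfl
    · funext v; simp [rhoI, sq]
    · ext v <;> simp [ContinuousLinearMap.comp_apply, ContinuousLinearMap.inl_apply,
        ContinuousLinearMap.inr_apply] <;> ring
  have h4 := h2.mul h3
  convert h4 using 1 <;> try rfl
  have hone : ℓ (rho q) = 1 := hℓ1 _ hq
  ext v <;> simp [ContinuousLinearMap.comp_apply, ContinuousLinearMap.inl_apply,
    ContinuousLinearMap.inr_apply, hone]

lemma sum_update_sq {d : ℕ} (i : Fin d) (f : Fin d → ℝ) (v : ℝ) :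
    ∑ j, (Function.update f i v j) ^ 2 = ∑ j, f j ^ 2 - f i ^ 2 + v ^ 2 := by
  have h1 : ∀ j, (Function.update f i v j) ^ 2
      = Function.update (fun j => f j ^ 2) i (v ^ 2) j := fun j =>
    Function.apply_update (fun _ x => x ^ 2) f i v j
  simp_rw [h1]
  rw [Finset.sum_update_of_mem (Finset.mem_univ i),
    Finset.sum_eq_sum_sdiff_singleton_add (Finset.mem_univ i) (fun j => f j ^ 2)]
  ring

/-- if `ℓ = 1` on `[-1/4, 1/4]` and `ρ(p) ≤ 1/4`, then the curve obtained from
`p` by rotating the pair `(x_i, y_i)` by angle `tα` (all other coordinates fixed) is a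
global solution of `γ' = X_{K_i}(γ)` with `γ(0) = p`, and `ρ` is constantly `ρ(p)` along it. -/
theorem stmt_6 (d n : ℕ) (ℓ : ℝ → ℝ) (hℓ : ContDiff ℝ 1 ℓ)
    (hℓ1 : ∀ r : ℝ, |r| ≤ 1 / 4 → ℓ r = 1) (α : ℝ) (i : Fin d)
    (K : (Fin d → ℝ) × (Fin d → ℝ) × (Fin n → ℝ) → ℝ)
    (hK : K = fun p => α * ℓ (rho p) * rhoI i p)
    (p : (Fin d → ℝ) × (Fin d → ℝ) × (Fin n → ℝ)) (hp : rho p ≤ 1 / 4)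
    (γ : ℝ → (Fin d → ℝ) × (Fin d → ℝ) × (Fin n → ℝ))
    (hγ : γ = fun t =>
      (Function.update p.1 i (Real.cos (t * α) * p.1 i - Real.sin (t * α) * p.2.1 i),
       Function.update p.2.1 i (Real.sin (t * α) * p.1 i + Real.cos (t * α) * p.2.1 i),
       p.2.2)) :
    γ 0 = p ∧
    (∀ t : ℝ, HasDerivAt γ (hamVF K (γ t)) t) ∧
    (∀ t : ℝ, rho (γ t) = rho p ∧ rho (γ t) ≤ 1 / 4) := by
  subst hK hγ
  have hrot : ∀ t : ℝ,
      (Real.cos (t * α) * p.1 i - Real.sin (t * α) * p.2.1 i) ^ 2 +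
        (Real.sin (t * α) * p.1 i + Real.cos (t * α) * p.2.1 i) ^ 2
      = p.1 i ^ 2 + p.2.1 i ^ 2 := by
    intro t
    linear_combination (p.1 i ^ 2 + p.2.1 i ^ 2) * Real.sin_sq_add_cos_sq (t * α)
  have hinv : ∀ t : ℝ, rho
      (Function.update p.1 i (Real.cos (t * α) * p.1 i - Real.sin (t * α) * p.2.1 i),
       Function.update p.2.1 i (Real.sin (t * α) * p.1 i + Real.cos (t * α) * p.2.1 i),
       p.2.2) = rho p := by
    intro t
    simp only [rho, sum_update_sq]
    linarith [hrot t]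
  have h0 : (0 : ℝ) ≤ rho p := by
    have h1 : (0:ℝ) ≤ ∑ j, p.1 j ^ 2 := Finset.sum_nonneg fun j _ => sq_nonneg _
    have h2 : (0:ℝ) ≤ ∑ j, p.2.1 j ^ 2 := Finset.sum_nonneg fun j _ => sq_nonneg _
    have h3 : (0:ℝ) ≤ ∑ k, p.2.2 k ^ 2 := Finset.sum_nonneg fun k _ => sq_nonneg _
    unfold rho
    linarith
  refine ⟨?_, ?_, fun t => ⟨hinv t, by rw [hinv t]; exact hp⟩⟩
  · simp [Function.update_eq_self]
  · intro t
    set a : ℝ := Real.cos (t * α) * p.1 i - Real.sin (t * α) * p.2.1 i with ha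
    set b : ℝ := Real.sin (t * α) * p.1 i + Real.cos (t * α) * p.2.1 i with hb
    set q : (Fin d → ℝ) × (Fin d → ℝ) × (Fin n → ℝ) :=
      (Function.update p.1 i a, Function.update p.2.1 i b, p.2.2) with hq
    have habs : |rho q| ≤ 1 / 4 := by
      rw [abs_le, hinv t]
      exact ⟨by linarith, hp⟩
    have hF := hasFDerivAt_K hℓ hℓ1 α i habs
    have hfd := hF.fderiv
    have hham : hamVF (fun p => α * ℓ (rho p) * rhoI i p) q =
        (fun j => if j = i then -(α * b) else 0,
         fun j => if j = i then α * a else 0, 0) := by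
      unfold hamVF
      rw [hfd]
      refine Prod.ext (funext fun j => ?_) (Prod.ext (funext fun j => ?_) rfl) <;>
        rcases eq_or_ne j i with hj | hj
      · simp [hj, hq, Pi.single_apply]
      · simp [hj, hq, Pi.single_apply, Ne.symm hj]
      · simp [hj, hq, Pi.single_apply]
      · simp [hj, hq, Pi.single_apply, Ne.symm hj]
    show HasDerivAt _ (hamVF _ q) t
    rw [hham]
    have hca : HasDerivAt (fun s : ℝ => Real.cos (s * α)) (-Real.sin (t * α) * α) t :=
      by have := (Real.hasDerivAt_cos (t * α)).comp t (hasDerivAt_mul_const (x := t) α); exact this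
    have hsa : HasDerivAt (fun s : ℝ => Real.sin (s * α)) (Real.cos (t * α) * α) t :=
      by have := (Real.hasDerivAt_sin (t * α)).comp t (hasDerivAt_mul_const (x := t) α); exact this
    refine HasDerivAt.prodMk ?_ (HasDerivAt.prodMk ?_ (hasDerivAt_const t _))
    · refine hasDerivAt_pi.2 fun j => ?_
      by_cases hj : j = i
      · subst hj
        rw [if_pos rfl]
        have hfun : (fun s : ℝ => Function.update p.1 j
            (Real.cos (s * α) * p.1 j - Real.sin (s * α) * p.2.1 j) j)
            = fun s : ℝ => Real.cos (s * α) * p.1 j - Real.sin (s * α) * p.2.1 j := by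
          funext s; rw [Function.update_self]
        rw [hfun]
        have hd := (hca.mul_const (p.1 j)).sub (hsa.mul_const (p.2.1 j))
        convert hd using 1
        · rfl
        rw [hb]; ring
      · simp only [Function.update_of_ne hj, if_neg hj]
        exact hasDerivAt_const t _
    · refine hasDerivAt_pi.2 fun j => ?_
      by_cases hj : j = i
      · subst hj
        rw [if_pos rfl]
        have hfun : (fun s : ℝ => Function.update p.2.1 j
            (Real.sin (s * α) * p.1 j + Real.cos (s * α) * p.2.1 j) j)
            = fun s : ℝ => Real.sin (s * α) * p.1 j + Real.cos (s * α) * p.2.1 j := by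
          funext s; rw [Function.update_self]
        rw [hfun]
        have hd := (hsa.mul_const (p.1 j)).add (hca.mul_const (p.2.1 j))
        convert hd using 1
        · rfl
        rw [ha]; ring
      · simp only [Function.update_of_ne hj, if_neg hj]
        exact hasDerivAt_const t _
end

section
/- Let X : ℝ^m → ℝ^m be a C¹ vector field whose derivative is uniformly bounded by L < 1, i.e. ‖D_x X‖ ≤ L for all x ∈ ℝ^m (operator norm). Then X generates a complete flow φ^t, and for every x ∈ ℝ^m the derivative of the time-one map satisfies ‖D_x φ¹ − I‖ ≤ L/(1 − L). -/
open MeasureTheory intervalIntegral Set Function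

variable {E : Type*} [NormedAddCommGroup E] [NormedSpace ℝ E] [CompleteSpace E]

/-- key weighted integral bound -/
lemma keyInt {f : ℝ → E} (hf : Continuous f) {C : ℝ}
    (hbd : ∀ s, ‖f s‖ ≤ C * Real.exp |s|) (t : ℝ) :
    ‖∫ s in (0:ℝ)..t, f s‖ ≤ C * (Real.exp |t| - 1) := by
  have hC : 0 ≤ C := by
    have := (norm_nonneg (f 0)).trans (hbd 0)
    simpa using this
  rcases le_or_gt 0 t with ht | ht
  · rw [abs_of_nonneg ht]
    calc ‖∫ s in (0:ℝ)..t, f s‖ ≤ ∫ s in (0:ℝ)..t, ‖f s‖ :=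
          intervalIntegral.norm_integral_le_integral_norm ht
      _ ≤ ∫ s in (0:ℝ)..t, C * Real.exp s := by
          apply intervalIntegral.integral_mono_on ht
            (hf.norm.intervalIntegrable _ _)
            ((continuous_const.mul Real.continuous_exp).intervalIntegrable _ _)
          intro s hs
          calc ‖f s‖ ≤ C * Real.exp |s| := hbd s
            _ = C * Real.exp s := by rw [abs_of_nonneg hs.1]
      _ = C * (Real.exp t - 1) := by
          rw [intervalIntegral.integral_const_mul, integral_exp, Real.exp_zero]
  · rw [abs_of_neg ht]
    rw [intervalIntegral.integral_symm]
    rw [norm_neg]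
    calc ‖∫ s in t..(0:ℝ), f s‖ ≤ ∫ s in t..(0:ℝ), ‖f s‖ :=
          intervalIntegral.norm_integral_le_integral_norm ht.le
      _ ≤ ∫ s in t..(0:ℝ), C * Real.exp (-s) := by
          apply intervalIntegral.integral_mono_on ht.le
            (hf.norm.intervalIntegrable _ _)
            ((continuous_const.mul (Real.continuous_exp.comp continuous_neg)).intervalIntegrable _ _)
          intro s hs
          calc ‖f s‖ ≤ C * Real.exp |s| := hbd s
            _ ≤ C * Real.exp (-s) := by
                apply mul_le_mul_of_nonneg_left _ hC
                exact Real.exp_le_exp.2 (by rw [abs_of_nonpos hs.2])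
      _ = C * (Real.exp (-t) - 1) := by
          have : (∫ s in t..(0:ℝ), Real.exp (-s)) = Real.exp (-t) - 1 := by
            have := intervalIntegral.integral_comp_neg (a := t) (b := 0) (fun s => Real.exp s)
            rw [this, integral_exp]
            norm_num
          rw [intervalIntegral.integral_const_mul, this]

/-- max-based Gronwall-type bound on [0,1] -/
lemma maxBound {g : ℝ → ℝ} (hg : Continuous g) {L c : ℝ} (hL1 : L < 1)
    (key : ∀ M, (∀ s ∈ Set.Icc (0:ℝ) 1, g s ≤ M) → ∀ t ∈ Set.Icc (0:ℝ) 1, g t ≤ c + L * M) :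
    ∀ t ∈ Set.Icc (0:ℝ) 1, g t ≤ c / (1 - L) := by
  obtain ⟨t₀, ht₀, hmax⟩ := isCompact_Icc.exists_isMaxOn (⟨0, by norm_num⟩ : (Set.Icc (0:ℝ) 1).Nonempty) hg.continuousOn
  have hmax' : ∀ s ∈ Set.Icc (0:ℝ) 1, g s ≤ g t₀ := fun s hs => hmax hs
  have h1 : g t₀ ≤ c + L * g t₀ := key (g t₀) hmax' t₀ ht₀
  have h2 : g t₀ ≤ c / (1 - L) := by
    rw [le_div_iff₀ (by linarith)]; nlinarith
  intro t ht
  exact (hmax' t ht).trans h2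


lemma hexp (t c : ℝ) (hc : 0 ≤ c) :
    Real.exp (-|t|) * (c * (Real.exp |t| - 1)) ≤ c := by
  have h1 : Real.exp (-|t|) * Real.exp |t| = 1 := by
    rw [← Real.exp_add]; simp
  nlinarith [Real.exp_pos (-|t|), (Real.exp_pos (-|t|)).le]


lemma flowExists {f : ℝ → E → E} {L : ℝ} (hL0 : 0 ≤ L) (hL1 : L < 1)
    (hlip : ∀ (s : ℝ) (a b : E), ‖f s a - f s b‖ ≤ L * ‖a - b‖)
    (hcont : ∀ g : ℝ → E, Continuous g → Continuous fun s => f s (g s))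
    (hfb : ∀ x : E, ∃ B, ∀ s, ‖f s x‖ ≤ B) :
    ∃ Y : E → ℝ → E,
      (∀ x, Continuous (Y x)) ∧
      (∀ x, ∃ C, ∀ t, ‖Y x t - x‖ ≤ C * Real.exp |t|) ∧
      (∀ x t, Y x t = x + ∫ s in (0:ℝ)..t, f s (Y x s)) ∧
      (∀ (x : E) (y : ℝ → E), Continuous y → (∃ C, ∀ t, ‖y t - x‖ ≤ C * Real.exp |t|) →
        (∀ t, y t = x + ∫ s in (0:ℝ)..t, f s (y s)) → ∀ t, y t = Y x t) := by
  classical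
  choose Bf hBf using hfb
  have hBf0 : ∀ x, 0 ≤ Bf x := fun x => (norm_nonneg _).trans (hBf x 0)
  -- continuity of the integrand
  have hic : ∀ (x : E) (z : ℝ → E), Continuous z →
      Continuous fun s => f s (x + Real.exp |s| • z s) := fun x z hz =>
    hcont _ (continuous_const.add (((Real.continuous_exp.comp continuous_abs)).smul hz))
  -- continuity of the Picard image
  have hPc : ∀ (x : E) (z : BoundedContinuousFunction ℝ E),
      Continuous fun t => Real.exp (-|t|) • ∫ s in (0:ℝ)..t, f s (x + Real.exp |s| • z s) :=
    fun x z => (Real.continuous_exp.comp continuous_abs.neg).smul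
      (intervalIntegral.continuous_primitive
        (fun a b => ((hic x z z.continuous).intervalIntegrable a b)) 0)
  -- bound on the Picard image
  have hPb : ∀ (x : E) (z : BoundedContinuousFunction ℝ E) (t : ℝ),
      ‖Real.exp (-|t|) • ∫ s in (0:ℝ)..t, f s (x + Real.exp |s| • z s)‖ ≤ Bf x + L * ‖z‖ := by
    intro x z t
    have hC0 : 0 ≤ Bf x + L * ‖z‖ := add_nonneg (hBf0 x) (mul_nonneg hL0 (norm_nonneg _))
    have hbd : ∀ s, ‖f s (x + Real.exp |s| • z s)‖ ≤ (Bf x + L * ‖z‖) * Real.exp |s| := by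
      intro s
      have h0 : ‖f s (x + Real.exp |s| • z s)‖
          ≤ ‖f s (x + Real.exp |s| • z s) - f s x‖ + ‖f s x‖ := by
        simpa using norm_add_le (f s (x + Real.exp |s| • z s) - f s x) (f s x)
      have h1 : ‖f s (x + Real.exp |s| • z s) - f s x‖ ≤ L * ‖Real.exp |s| • z s‖ := by
        simpa using hlip s (x + Real.exp |s| • z s) x
      have h2 : ‖Real.exp |s| • z s‖ = Real.exp |s| * ‖z s‖ := by
        rw [norm_smul, Real.norm_eq_abs, abs_of_pos (Real.exp_pos _)]
      have h3 : ‖z s‖ ≤ ‖z‖ := z.norm_coe_le_norm s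
      have h4 : (1:ℝ) ≤ Real.exp |s| := Real.one_le_exp (abs_nonneg s)
      have h5 : ‖f s x‖ ≤ Bf x := hBf x s
      have h6 : L * (Real.exp |s| * ‖z s‖) ≤ L * (Real.exp |s| * ‖z‖) :=
        mul_le_mul_of_nonneg_left
          (mul_le_mul_of_nonneg_left h3 (Real.exp_pos _).le) hL0
      have h7 := mul_le_mul_of_nonneg_left h4 (hBf0 x)
      rw [h2] at h1
      nlinarith [h0, h1, h5, h6, h7]
    calc ‖Real.exp (-|t|) • ∫ s in (0:ℝ)..t, f s (x + Real.exp |s| • z s)‖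
        = Real.exp (-|t|) * ‖∫ s in (0:ℝ)..t, f s (x + Real.exp |s| • z s)‖ := by
          rw [norm_smul, Real.norm_eq_abs, abs_of_pos (Real.exp_pos _)]
      _ ≤ Real.exp (-|t|) * ((Bf x + L * ‖z‖) * (Real.exp |t| - 1)) := by
          apply mul_le_mul_of_nonneg_left _ (Real.exp_pos _).le
          exact keyInt (hic x z z.continuous) hbd t
      _ ≤ Bf x + L * ‖z‖ := hexp t _ hC0
  set P : E → BoundedContinuousFunction ℝ E → BoundedContinuousFunction ℝ E := fun x z =>
    BoundedContinuousFunction.ofNormedAddCommGroup _ (hPc x z) (Bf x + L * ‖z‖) (hPb x z)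
    with hPdef
  have hPapp : ∀ x z t, P x z t
      = Real.exp (-|t|) • ∫ s in (0:ℝ)..t, f s (x + Real.exp |s| • z s) := fun x z t => rfl
  have hcontr : ∀ x, ContractingWith L.toNNReal (P x) := by
    intro x
    constructor
    · exact_mod_cast Real.toNNReal_lt_one.2 hL1
    · apply LipschitzWith.of_dist_le_mul
      intro z w
      rw [Real.coe_toNNReal L hL0]
      apply (BoundedContinuousFunction.dist_le (mul_nonneg hL0 dist_nonneg)).2
      intro t
      rw [dist_eq_norm, hPapp, hPapp, ← smul_sub,
        ← intervalIntegral.integral_sub ((hic x z z.continuous).intervalIntegrable _ _)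
          ((hic x w w.continuous).intervalIntegrable _ _)]
      have hbd : ∀ s, ‖f s (x + Real.exp |s| • z s) - f s (x + Real.exp |s| • w s)‖
          ≤ (L * dist z w) * Real.exp |s| := by
        intro s
        have h1 := hlip s (x + Real.exp |s| • z s) (x + Real.exp |s| • w s)
        have h2 : x + Real.exp |s| • z s - (x + Real.exp |s| • w s)
            = Real.exp |s| • (z s - w s) := by rw [smul_sub]; abel
        rw [h2] at h1
        have h3 : ‖Real.exp |s| • (z s - w s)‖ = Real.exp |s| * ‖z s - w s‖ := by
          rw [norm_smul, Real.norm_eq_abs, abs_of_pos (Real.exp_pos _)]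
        have h4 : ‖z s - w s‖ ≤ dist z w := by
          rw [← dist_eq_norm]; exact BoundedContinuousFunction.dist_coe_le_dist s
        have h6 : L * (Real.exp |s| * ‖z s - w s‖) ≤ L * (Real.exp |s| * dist z w) :=
          mul_le_mul_of_nonneg_left
            (mul_le_mul_of_nonneg_left h4 (Real.exp_pos _).le) hL0
        rw [h3] at h1
        nlinarith [h1, h6]
      calc ‖Real.exp (-|t|) • ∫ s in (0:ℝ)..t,
            (f s (x + Real.exp |s| • z s) - f s (x + Real.exp |s| • w s))‖
          = Real.exp (-|t|) * ‖∫ s in (0:ℝ)..t,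
            (f s (x + Real.exp |s| • z s) - f s (x + Real.exp |s| • w s))‖ := by
            rw [norm_smul, Real.norm_eq_abs, abs_of_pos (Real.exp_pos _)]
        _ ≤ Real.exp (-|t|) * ((L * dist z w) * (Real.exp |t| - 1)) := by
            apply mul_le_mul_of_nonneg_left _ (Real.exp_pos _).le
            exact keyInt ((hic x z z.continuous).sub (hic x w w.continuous)) hbd t
        _ ≤ L * dist z w := hexp t _ (mul_nonneg hL0 dist_nonneg)
  set Z : E → BoundedContinuousFunction ℝ E := fun x =>
    ContractingWith.fixedPoint (P x) (hcontr x) with hZdef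
  set Y : E → ℝ → E := fun x t => x + Real.exp |t| • Z x t with hYdef
  have hfix : ∀ x t, Real.exp (-|t|) • (∫ s in (0:ℝ)..t, f s (Y x s)) = Z x t := by
    intro x t
    have h := ContractingWith.fixedPoint_isFixedPt (hcontr x)
    exact DFunLike.congr_fun h t
  have hYint : ∀ x t, Y x t = x + ∫ s in (0:ℝ)..t, f s (Y x s) := by
    intro x t
    show x + Real.exp |t| • Z x t = _
    rw [← hfix x t, smul_smul, ← Real.exp_add, add_neg_cancel, Real.exp_zero, one_smul]
  have hYc : ∀ x, Continuous (Y x) := fun x =>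
    continuous_const.add ((Real.continuous_exp.comp continuous_abs).smul (Z x).continuous)
  have hYbd : ∀ x, ∃ C, ∀ t, ‖Y x t - x‖ ≤ C * Real.exp |t| := by
    intro x
    refine ⟨‖Z x‖, fun t => ?_⟩
    show ‖x + Real.exp |t| • Z x t - x‖ ≤ _
    rw [add_sub_cancel_left, norm_smul, Real.norm_eq_abs, abs_of_pos (Real.exp_pos _), mul_comm]
    exact mul_le_mul_of_nonneg_right ((Z x).norm_coe_le_norm t) (Real.exp_pos _).le
  refine ⟨Y, hYc, hYbd, hYint, ?_⟩
  intro x y hyc hybd hyint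
  obtain ⟨C, hyC⟩ := hybd
  have hC0 : 0 ≤ C := by
    have := (norm_nonneg (y 0 - x)).trans (hyC 0); simpa using this
  have hwc : Continuous fun t => Real.exp (-|t|) • (y t - x) :=
    (Real.continuous_exp.comp continuous_abs.neg).smul (hyc.sub continuous_const)
  have hwb : ∀ t, ‖Real.exp (-|t|) • (y t - x)‖ ≤ C := by
    intro t
    rw [norm_smul, Real.norm_eq_abs, abs_of_pos (Real.exp_pos _)]
    have h1 := hyC t
    have h2 : Real.exp (-|t|) * Real.exp |t| = 1 := by rw [← Real.exp_add]; simp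
    nlinarith [Real.exp_pos (-|t|), norm_nonneg (y t - x)]
  set w : BoundedContinuousFunction ℝ E :=
    BoundedContinuousFunction.ofNormedAddCommGroup _ hwc C hwb with hwdef
  have hwapp : ∀ t, w t = Real.exp (-|t|) • (y t - x) := fun t => rfl
  have harg : ∀ s, x + Real.exp |s| • (w s) = y s := by
    intro s
    rw [hwapp, smul_smul, ← Real.exp_add, add_neg_cancel, Real.exp_zero, one_smul]
    abel
  have hwfix : IsFixedPt (P x) w := by
    apply DFunLike.ext
    intro t
    rw [hPapp]
    simp only [harg]
    rw [hwapp]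
    congr 1
    rw [hyint t]
    abel
  have huniq := ContractingWith.fixedPoint_unique (hcontr x) hwfix
  intro t
  have hz : w t = Z x t := DFunLike.congr_fun huniq t
  show y t = x + Real.exp |t| • Z x t
  rw [← hz, harg t]



/-- a `C¹` vector field on `ℝ^m` whose derivative is uniformly bounded by
`L < 1` generates a complete flow, and the derivative of the time-one map satisfies
`‖D φ¹ - I‖ ≤ L/(1-L)`. -/
theorem stmt_8 (m : ℕ) (X : (Fin m → ℝ) → (Fin m → ℝ)) (hX : ContDiff ℝ 1 X)
    (L : ℝ) (hL1 : L < 1) (hDX : ∀ x, ‖fderiv ℝ X x‖ ≤ L) :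
    ∃ φ : ℝ → (Fin m → ℝ) → (Fin m → ℝ),
      (∀ x, φ 0 x = x) ∧
      (∀ s t x, φ (s + t) x = φ s (φ t x)) ∧
      (∀ x t, HasDerivAt (fun s => φ s x) (X (φ t x)) t) ∧
      (∀ x, ∃ D : (Fin m → ℝ) →L[ℝ] (Fin m → ℝ),
        HasFDerivAt (φ 1) D x ∧
        ‖D - ContinuousLinearMap.id ℝ (Fin m → ℝ)‖ ≤ L / (1 - L)) := by
  have hL0 : 0 ≤ L := le_trans (norm_nonneg _) (hDX (fun _ => 0))
  have h1L : (0:ℝ) < 1 - L := by linarith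
  have hXd : Differentiable ℝ X := hX.differentiable one_ne_zero
  have hXc : Continuous X := hX.continuous
  have hfdc : Continuous fun y => fderiv ℝ X y := hX.continuous_fderiv one_ne_zero
  have hlip : ∀ (a b : Fin m → ℝ), ‖X a - X b‖ ≤ L * ‖a - b‖ := fun a b =>
    Convex.norm_image_sub_le_of_norm_fderiv_le (fun y _ => hXd y) (fun y _ => hDX y)
      convex_univ (Set.mem_univ b) (Set.mem_univ a)
  obtain ⟨Y, hYc, hYbd, hYeq, hYuniq⟩ := flowExists (f := fun (_ : ℝ) y => X y) hL0 hL1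
    (fun _ a b => hlip a b) (fun g hg => hXc.comp hg) (fun x => ⟨‖X x‖, fun _ => le_rfl⟩)
  have hXYc : ∀ x, Continuous fun s => X (Y x s) := fun x => hXc.comp (hYc x)
  refine ⟨fun t x => Y x t, ?_, ?_, ?_, ?_⟩
  · -- φ 0 x = x
    intro x
    show Y x 0 = x
    rw [hYeq]
    simp
  · -- group law
    intro s t x
    obtain ⟨C, hC⟩ := hYbd x
    have hC0 : 0 ≤ C := by
      have := (norm_nonneg (Y x 0 - x)).trans (hC 0); simpa using this
    have hbd : ∀ u, ‖Y x (u + t) - Y x t‖ ≤ (2 * C * Real.exp |t|) * Real.exp |u| := by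
      intro u
      have h1 : Y x (u + t) - Y x t = (Y x (u + t) - x) - (Y x t - x) := by abel
      have h2 := hC (u + t); have h3 := hC t
      have h4 : Real.exp |u + t| ≤ Real.exp |u| * Real.exp |t| := by
        rw [← Real.exp_add]; exact Real.exp_le_exp.2 (abs_add_le u t)
      have h5 : (1:ℝ) ≤ Real.exp |u| := Real.one_le_exp (abs_nonneg u)
      have h6 := mul_le_mul_of_nonneg_left h4 hC0
      have h7 : ‖Y x (u + t) - Y x t‖ ≤ ‖Y x (u + t) - x‖ + ‖Y x t - x‖ := by
        rw [h1]; exact norm_sub_le _ _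
      nlinarith [Real.exp_pos |t|, Real.exp_pos |u|, mul_nonneg hC0 (Real.exp_pos |t|).le,
        mul_le_mul_of_nonneg_left h5 (mul_nonneg hC0 (Real.exp_pos |t|).le)]
    have heq : ∀ u, Y x (u + t) = Y x t + ∫ r in (0:ℝ)..u, X (Y x (r + t)) := by
      intro u
      have hadd : (∫ r in (0:ℝ)..t, X (Y x r)) + (∫ r in t..(u + t), X (Y x r))
          = ∫ r in (0:ℝ)..(u + t), X (Y x r) :=
        intervalIntegral.integral_add_adjacent_intervals
          ((hXYc x).intervalIntegrable _ _) ((hXYc x).intervalIntegrable _ _)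
      have hcomp : (∫ r in (0:ℝ)..u, X (Y x (r + t))) = ∫ r in (0+t)..(u + t), X (Y x r) :=
        intervalIntegral.integral_comp_add_right (f := fun r => X (Y x r)) t
      rw [hYeq x (u + t), hYeq x t, hcomp, zero_add, ← hadd]
      abel
    exact hYuniq (Y x t) (fun u => Y x (u + t))
      ((hYc x).comp (continuous_id.add continuous_const))
      ⟨2 * C * Real.exp |t|, hbd⟩ heq s
  · -- time derivative
    intro x t
    have h1 : HasDerivAt (fun s => ∫ r in (0:ℝ)..s, X (Y x r)) (X (Y x t)) t :=
      intervalIntegral.integral_hasDerivAt_right ((hXYc x).intervalIntegrable _ _)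
        ((hXYc x).stronglyMeasurable.stronglyMeasurableAtFilter) ((hXYc x).continuousAt)
    exact (h1.const_add x).congr_of_eventuallyEq
      (Filter.Eventually.of_forall (fun s => hYeq x s))
  · -- derivative of time-one map
    intro x
    set A : ℝ → ((Fin m → ℝ) →L[ℝ] (Fin m → ℝ)) := fun s => fderiv ℝ X (Y x s) with hA
    have hAc : Continuous A := hfdc.comp (hYc x)
    have hAb : ∀ s, ‖A s‖ ≤ L := fun s => hDX _
    obtain ⟨V, hVc, _, hVeq, _⟩ := flowExists (E := (Fin m → ℝ) →L[ℝ] (Fin m → ℝ))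
      (f := fun s u => (A s).comp u) hL0 hL1
      (fun s a b => by
        rw [← ContinuousLinearMap.comp_sub]
        exact (ContinuousLinearMap.opNorm_comp_le _ _).trans
          (mul_le_mul_of_nonneg_right (hAb s) (norm_nonneg _)))
      (fun g hg => hAc.clm_comp hg)
      (fun u => ⟨L * ‖u‖, fun s => (ContinuousLinearMap.opNorm_comp_le _ _).trans
        (mul_le_mul_of_nonneg_right (hAb s) (norm_nonneg _))⟩)
    set Ψ : ℝ → ((Fin m → ℝ) →L[ℝ] (Fin m → ℝ)) := V 1 with hΨ
    have hΨeq : ∀ t, Ψ t = 1 + ∫ s in (0:ℝ)..t, (A s).comp (Ψ s) := hVeq 1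
    have hΨc : Continuous Ψ := hVc 1
    have hAΨc : Continuous fun s => (A s).comp (Ψ s) := hAc.clm_comp hΨc
    have hΨ1bd : ∀ t ∈ Set.Icc (0:ℝ) 1, ‖Ψ t - 1‖ ≤ L / (1 - L) := by
      apply maxBound (hΨc.sub continuous_const).norm hL1
      intro M hM t ht
      have hM0 : 0 ≤ M := (norm_nonneg _).trans (hM 0 ⟨le_refl 0, zero_le_one⟩)
      have key : Ψ t - 1 = ∫ s in (0:ℝ)..t, (A s).comp (Ψ s) := by
        rw [hΨeq t]; abel
      show ‖Ψ t - 1‖ ≤ _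
      rw [key]
      have hb : ∀ s ∈ Set.uIoc (0:ℝ) t, ‖(A s).comp (Ψ s)‖ ≤ L * (1 + M) := by
        intro s hs
        rw [Set.uIoc_of_le ht.1] at hs
        have hsI : s ∈ Set.Icc (0:ℝ) 1 := ⟨hs.1.le, hs.2.trans ht.2⟩
        have h1 : ‖Ψ s‖ ≤ 1 + M := by
          have := norm_add_le (Ψ s - 1) (1 : (Fin m → ℝ) →L[ℝ] (Fin m → ℝ))
          simp only [sub_add_cancel] at this
          have h2 : ‖(1 : (Fin m → ℝ) →L[ℝ] (Fin m → ℝ))‖ ≤ 1 := by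
            rw [ContinuousLinearMap.one_def]; exact ContinuousLinearMap.norm_id_le
          have h3 : ‖Ψ s - 1‖ ≤ M := hM s hsI
          linarith
        exact (ContinuousLinearMap.opNorm_comp_le _ _).trans
          (mul_le_mul (hAb s) h1 (norm_nonneg _) hL0)
      calc ‖∫ s in (0:ℝ)..t, (A s).comp (Ψ s)‖ ≤ (L * (1 + M)) * |t - 0| :=
            intervalIntegral.norm_integral_le_of_norm_le_const hb
        _ ≤ L + L * M := by
            rw [sub_zero, abs_of_nonneg ht.1]
            nlinarith [mul_nonneg hL0 hM0, ht.2, ht.1, mul_nonneg (mul_nonneg hL0 hM0) ht.1]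
    -- Lipschitz estimate on the flow
    have hflip : ∀ (a b : Fin m → ℝ), ∀ t ∈ Set.Icc (0:ℝ) 1,
        ‖Y b t - Y a t‖ ≤ ‖b - a‖ / (1 - L) := by
      intro a b
      apply maxBound ((hYc b).sub (hYc a)).norm hL1
      intro M hM t ht
      have hM0 : 0 ≤ M := (norm_nonneg _).trans (hM 0 ⟨le_refl 0, zero_le_one⟩)
      have heq : Y b t - Y a t = (b - a) + ∫ s in (0:ℝ)..t, (X (Y b s) - X (Y a s)) := by
        rw [hYeq b t, hYeq a t, intervalIntegral.integral_sub
          ((hXYc b).intervalIntegrable _ _) ((hXYc a).intervalIntegrable _ _)]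
        abel
      have hb2 : ∀ s ∈ Set.uIoc (0:ℝ) t, ‖X (Y b s) - X (Y a s)‖ ≤ L * M := by
        intro s hs
        rw [Set.uIoc_of_le ht.1] at hs
        have hsI : s ∈ Set.Icc (0:ℝ) 1 := ⟨hs.1.le, hs.2.trans ht.2⟩
        exact (hlip _ _).trans (mul_le_mul_of_nonneg_left (hM s hsI) hL0)
      calc ‖Y b t - Y a t‖ ≤ ‖b - a‖ + ‖∫ s in (0:ℝ)..t, (X (Y b s) - X (Y a s))‖ := by
            rw [heq]; exact norm_add_le _ _
        _ ≤ ‖b - a‖ + (L * M) * |t - 0| :=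
            add_le_add_right (intervalIntegral.norm_integral_le_of_norm_le_const hb2) _
        _ ≤ ‖b - a‖ + L * M := by
            rw [sub_zero, abs_of_nonneg ht.1]
            nlinarith [mul_nonneg hL0 hM0, ht.2, ht.1]
    refine ⟨Ψ 1, ?_, ?_⟩
    · -- HasFDerivAt
      rw [hasFDerivAt_iff_isLittleO_nhds_zero, Asymptotics.isLittleO_iff]
      intro c hc
      have hKcp : IsCompact ((Y x) '' (Set.Icc 0 1)) := isCompact_Icc.image (hYc x)
      have hUC : UniformContinuousOn (fderiv ℝ X)
          (Metric.cthickening 1 ((Y x) '' (Set.Icc 0 1))) :=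
        (hKcp.cthickening).uniformContinuousOn_of_continuous hfdc.continuousOn
      rw [Metric.uniformContinuousOn_iff] at hUC
      have hε0 : 0 < c * (1 - L)^2 := by positivity
      obtain ⟨δ, hδ0, hδ⟩ := hUC (c * (1 - L)^2) hε0
      rw [Metric.eventually_nhds_iff]
      refine ⟨(1 - L) * min δ 1, by positivity, ?_⟩
      intro h hh
      rw [dist_zero_right] at hh
      have hflip' : ∀ s ∈ Set.Icc (0:ℝ) 1, ‖Y (x + h) s - Y x s‖ ≤ ‖h‖ / (1 - L) := by
        intro s hs
        have := hflip x (x + h) s hs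
        rwa [add_sub_cancel_left] at this
      have hsmall : ‖h‖ / (1 - L) < min δ 1 := by
        rw [div_lt_iff₀ h1L]; linarith [hh]
      -- remainder estimate
      have hrem : ∀ s ∈ Set.Icc (0:ℝ) 1,
          ‖X (Y (x + h) s) - X (Y x s) - A s (Y (x + h) s - Y x s)‖
            ≤ (c * (1 - L)^2) * (‖h‖ / (1 - L)) := by
        intro s hs
        have hab : ‖Y (x + h) s - Y x s‖ ≤ ‖h‖ / (1 - L) := hflip' s hs
        have haK : Y x s ∈ (Y x) '' (Set.Icc 0 1) := Set.mem_image_of_mem _ hs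
        have hseg : ∀ y ∈ segment ℝ (Y x s) (Y (x + h) s),
            ‖y - Y x s‖ ≤ ‖Y (x + h) s - Y x s‖ := by
          intro y hy
          rw [segment_eq_image'] at hy
          obtain ⟨θ, hθ, rfl⟩ := hy
          rw [add_sub_cancel_left, norm_smul, Real.norm_eq_abs, abs_of_nonneg hθ.1]
          nlinarith [norm_nonneg (Y (x + h) s - Y x s), hθ.2]
        have hkey : ∀ y ∈ segment ℝ (Y x s) (Y (x + h) s),
            ‖fderiv ℝ X y - A s‖ ≤ c * (1 - L)^2 := by
          intro y hy
          have h1 := hseg y hy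
          have hyK : y ∈ Metric.cthickening 1 ((Y x) '' (Set.Icc 0 1)) := by
            apply Metric.mem_cthickening_of_dist_le y (Y x s) 1 _ haK
            rw [dist_eq_norm]
            exact (h1.trans hab).trans (hsmall.le.trans (min_le_right _ _))
          have haK1 : Y x s ∈ Metric.cthickening 1 ((Y x) '' (Set.Icc 0 1)) :=
            Metric.self_subset_cthickening _ haK
          have hd : dist y (Y x s) < δ := by
            rw [dist_eq_norm]
            exact lt_of_le_of_lt (h1.trans hab) (lt_of_lt_of_le hsmall (min_le_left _ _))
          have := hδ y hyK (Y x s) haK1 hd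
          rw [dist_eq_norm] at this
          exact this.le
        have hmvt := Convex.norm_image_sub_le_of_norm_hasFDerivWithin_le
          (f := fun y => X y - A s y) (f' := fun y => fderiv ℝ X y - A s)
          (fun y _ => ((hXd y).hasFDerivAt.sub (A s).hasFDerivAt).hasFDerivWithinAt)
          hkey (convex_segment (Y x s) (Y (x + h) s))
          (left_mem_segment ℝ (Y x s) (Y (x + h) s))
          (right_mem_segment ℝ (Y x s) (Y (x + h) s))
        have hrw : X (Y (x + h) s) - A s (Y (x + h) s) - (X (Y x s) - A s (Y x s))
            = X (Y (x + h) s) - X (Y x s) - A s (Y (x + h) s - Y x s) := by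
          rw [map_sub]; abel
        rw [hrw] at hmvt
        exact hmvt.trans (mul_le_mul_of_nonneg_left hab hε0.le)
      -- the error function u
      set u : ℝ → (Fin m → ℝ) := fun t => Y (x + h) t - Y x t - Ψ t h with hu
      have huc : Continuous u :=
        (((hYc (x + h)).sub (hYc x)).sub (hΨc.clm_apply continuous_const))
      have hrc : Continuous fun s =>
          X (Y (x + h) s) - X (Y x s) - A s (Y (x + h) s - Y x s) :=
        (((hXYc (x + h)).sub (hXYc x)).sub
          (hAc.clm_apply ((hYc (x + h)).sub (hYc x))))
      have hueq : ∀ t, u t = ∫ s in (0:ℝ)..t,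
          (A s (u s) + (X (Y (x + h) s) - X (Y x s) - A s (Y (x + h) s - Y x s))) := by
        intro t
        have h1 : Y (x + h) t - Y x t = h + ∫ s in (0:ℝ)..t, (X (Y (x + h) s) - X (Y x s)) := by
          rw [hYeq (x + h) t, hYeq x t, intervalIntegral.integral_sub
            ((hXYc (x + h)).intervalIntegrable _ _) ((hXYc x).intervalIntegrable _ _)]
          abel
        have h2 : Ψ t h = h + ∫ s in (0:ℝ)..t, A s (Ψ s h) := by
          rw [hΨeq t, ContinuousLinearMap.add_apply, ContinuousLinearMap.one_apply]
          congr 1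
          rw [ContinuousLinearMap.intervalIntegral_apply (hAΨc.intervalIntegrable _ _) h]
          rfl
        show Y (x + h) t - Y x t - Ψ t h = _
        rw [h1, h2]
        have h3 : (∫ s in (0:ℝ)..t,
            (A s (u s) + (X (Y (x + h) s) - X (Y x s) - A s (Y (x + h) s - Y x s))))
            = (∫ s in (0:ℝ)..t, (X (Y (x + h) s) - X (Y x s)))
              - ∫ s in (0:ℝ)..t, A s (Ψ s h) := by
          rw [← intervalIntegral.integral_sub (f := fun s => X (Y (x + h) s) - X (Y x s))
            (((hXYc (x + h)).sub (hXYc x)).intervalIntegrable _ _)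
            ((hAc.clm_apply (hΨc.clm_apply continuous_const)).intervalIntegrable _ _)]
          apply intervalIntegral.integral_congr
          intro s _
          show A s (Y (x + h) s - Y x s - Ψ s h) + _ = _
          rw [map_sub, map_sub]
          abel
        rw [h3]
        abel
      have hufin : ∀ t ∈ Set.Icc (0:ℝ) 1,
          ‖u t‖ ≤ ((c * (1 - L)^2) * (‖h‖ / (1 - L))) / (1 - L) := by
        apply maxBound huc.norm hL1
        intro M hM t ht
        have hM0 : 0 ≤ M := (norm_nonneg _).trans (hM 0 ⟨le_refl 0, zero_le_one⟩)
        rw [hueq t]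
        have hb3 : ∀ s ∈ Set.uIoc (0:ℝ) t,
            ‖A s (u s) + (X (Y (x + h) s) - X (Y x s) - A s (Y (x + h) s - Y x s))‖
              ≤ (c * (1 - L)^2) * (‖h‖ / (1 - L)) + L * M := by
          intro s hs
          rw [Set.uIoc_of_le ht.1] at hs
          have hsI : s ∈ Set.Icc (0:ℝ) 1 := ⟨hs.1.le, hs.2.trans ht.2⟩
          have hA1 : ‖A s (u s)‖ ≤ L * M :=
            ((A s).le_opNorm (u s)).trans
              (mul_le_mul (hAb s) (hM s hsI) (norm_nonneg _) hL0)
          have hA2 := hrem s hsI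
          calc ‖_ + _‖ ≤ ‖A s (u s)‖
              + ‖X (Y (x + h) s) - X (Y x s) - A s (Y (x + h) s - Y x s)‖ := norm_add_le _ _
            _ ≤ (c * (1 - L)^2) * (‖h‖ / (1 - L)) + L * M := by linarith
        calc ‖∫ s in (0:ℝ)..t, _‖
            ≤ ((c * (1 - L)^2) * (‖h‖ / (1 - L)) + L * M) * |t - 0| :=
              intervalIntegral.norm_integral_le_of_norm_le_const hb3
          _ ≤ (c * (1 - L)^2) * (‖h‖ / (1 - L)) + L * M := by
              rw [sub_zero, abs_of_nonneg ht.1]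
              have hc1 : 0 ≤ (c * (1 - L)^2) * (‖h‖ / (1 - L)) + L * M := by positivity
              nlinarith [ht.2, ht.1]
      have hfinal := hufin 1 ⟨zero_le_one, le_rfl⟩
      have heq2 : ((c * (1 - L)^2) * (‖h‖ / (1 - L))) / (1 - L) = c * ‖h‖ := by
        field_simp
      rw [heq2] at hfinal
      exact hfinal
    · -- norm bound
      rw [← ContinuousLinearMap.one_def]
      exact hΨ1bd 1 ⟨zero_le_one, le_rfl⟩
end

section
/- Let η > 0 and θ, ξ ∈ (0, π/2) satisfy cos ξ = ((η + η⁻¹)/2) cos θ. Define P = (η⁻¹ sin θ sin ξ)^{−1/2} · [[η⁻¹ sin θ, 0],[cos ξ − η cos θ, sin ξ]]. Then det P = 1 and R_θ⁻¹ · diag(η, η⁻¹) = P R_{−ξ} P⁻¹; that is, the matrix [[η cos θ, η⁻¹ sin θ],[−η sin θ, η⁻¹ cos θ]] is conjugate, by a determinant-one matrix, to the rotation by angle −ξ. -/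
set_option maxHeartbeats 1000000


open Matrix

/-- The `2×2` rotation matrix by angle `β`. -/
noncomputable def Rmat (β : ℝ) : Matrix (Fin 2) (Fin 2) ℝ :=
  !![Real.cos β, -Real.sin β; Real.sin β, Real.cos β]

/-- `R_θ⁻¹ · diag(η, η⁻¹)` is conjugate, by the explicit determinant-one
matrix `P`, to the rotation by angle `-ξ`, where `cos ξ = ((η+η⁻¹)/2) cos θ`. -/
theorem stmt_12 (η θ ξ : ℝ) (hη : 0 < η)
    (hθ : θ ∈ Set.Ioo 0 (Real.pi / 2)) (hξ : ξ ∈ Set.Ioo 0 (Real.pi / 2))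
    (hcos : Real.cos ξ = ((η + η⁻¹) / 2) * Real.cos θ)
    (P : Matrix (Fin 2) (Fin 2) ℝ)
    (hP : P = (Real.sqrt (η⁻¹ * Real.sin θ * Real.sin ξ))⁻¹ •
      !![η⁻¹ * Real.sin θ, 0; Real.cos ξ - η * Real.cos θ, Real.sin ξ]) :
    P.det = 1 ∧
    (Rmat θ)⁻¹ * Matrix.diagonal ![η, η⁻¹] =
      !![η * Real.cos θ, η⁻¹ * Real.sin θ; -(η * Real.sin θ), η⁻¹ * Real.cos θ] ∧
    (Rmat θ)⁻¹ * Matrix.diagonal ![η, η⁻¹] = P * Rmat (-ξ) * P⁻¹ := by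
  obtain ⟨hθ0, hθ1⟩ := hθ
  obtain ⟨hξ0, hξ1⟩ := hξ
  have hpi := Real.pi_pos
  have hsθ : 0 < Real.sin θ := Real.sin_pos_of_pos_of_lt_pi hθ0 (by linarith)
  have hsξ : 0 < Real.sin ξ := Real.sin_pos_of_pos_of_lt_pi hξ0 (by linarith)
  have hs : 0 < η⁻¹ * Real.sin θ * Real.sin ξ := by positivity
  have hsqrt : 0 < Real.sqrt (η⁻¹ * Real.sin θ * Real.sin ξ) := Real.sqrt_pos.2 hs
  have hsq : Real.sqrt (η⁻¹ * Real.sin θ * Real.sin ξ) ^ 2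
      = η⁻¹ * Real.sin θ * Real.sin ξ := Real.sq_sqrt hs.le
  have hdet : P.det = 1 := by
    rw [hP, Matrix.det_smul, Matrix.det_fin_two_of]
    have hc : Fintype.card (Fin 2) = 2 := by simp
    rw [hc]
    simp only [zero_mul, sub_zero, inv_pow, hsq]
    exact inv_mul_cancel₀ hs.ne'
  have hηinv : η * η⁻¹ = 1 := mul_inv_cancel₀ hη.ne'
  have hRdet : IsUnit (Rmat θ).det := by
    simp [Rmat, Matrix.det_fin_two_of]
    nlinarith [Real.sin_sq_add_cos_sq θ]
  haveI := (Rmat θ).invertibleOfIsUnitDet hRdet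
  have h2 : (Rmat θ)⁻¹ * Matrix.diagonal ![η, η⁻¹] =
      !![η * Real.cos θ, η⁻¹ * Real.sin θ; -(η * Real.sin θ), η⁻¹ * Real.cos θ] := by
    rw [Matrix.inv_mul_eq_iff_eq_mul_of_invertible]
    ext i j
    fin_cases i <;> fin_cases j <;>
      simp [Rmat, Matrix.mul_apply, Matrix.diagonal, Fin.sum_univ_two] <;>
      nlinarith [Real.sin_sq_add_cos_sq θ]
  refine ⟨hdet, h2, ?_⟩
  have hPdet : IsUnit P.det := by rw [hdet]; exact isUnit_one
  haveI := P.invertibleOfIsUnitDet hPdet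
  rw [h2, eq_comm, Matrix.mul_inv_eq_iff_eq_mul_of_invertible, hP,
    Matrix.smul_mul, Matrix.mul_smul]
  congr 1
  ext i j
  fin_cases i <;> fin_cases j <;>
    simp [Rmat, Matrix.mul_apply, Fin.sum_univ_two, Real.cos_neg, Real.sin_neg] <;>
    first
      | nlinarith [Real.sin_sq_add_cos_sq θ, Real.sin_sq_add_cos_sq ξ, hcos, hηinv]
      | linear_combination (Real.sin θ ^ 2 + Real.cos θ ^ 2) * hηinv +
          (2 * Real.cos ξ) * hcos + Real.sin_sq_add_cos_sq θ - Real.sin_sq_add_cos_sq ξ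
end
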